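/- Define φ(α) = log(1 + exp(−α)) (the logistic loss) and ψ(α) = exp(α)/(1 + exp(α))² for α ∈ ℝ, and note φ′(a) = −1/(1 + exp(a)). Then for all real numbers a, b and every M ≥ max(|a|, |b|): φ(b) ≥ φ(a) + φ′(a)·(b − a) + (ψ(M)/2)·(b − a)². -/

import Mathlib

/-- The logistic loss `φ(α) = log(1 + exp(−α))`. -/
noncomputable def logisticLoss (α : ℝ) : ℝ := Real.log (1 + Real.exp (-α))

/-- The second derivative of the logistic function,
`ψ(α) = exp(α)/(1 + exp(α))²`. -/
noncomputable def logisticPsi (α : ℝ) : ℝ := Real.exp α / (1 + Real.exp α) ^ 2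

lemma one_add_exp_pos (x : ℝ) : 0 < 1 + Real.exp x := by positivity

lemma logisticLoss_hasDerivAt (x : ℝ) :
    HasDerivAt logisticLoss (-(1 / (1 + Real.exp x))) x := by
  have h1 : HasDerivAt (fun y : ℝ => 1 + Real.exp (-y)) (-Real.exp (-x)) x := by
    simpa using (((hasDerivAt_id x).neg).exp.const_add 1)
  have h2 := h1.log (by positivity)
  refine h2.congr_deriv ?_
  have hx := Real.exp_pos x
  rw [Real.exp_neg]
  field_simp
  ring

lemma logisticDeriv_hasDerivAt (x : ℝ) :
    HasDerivAt (fun y : ℝ => -(1 / (1 + Real.exp y))) (logisticPsi x) x := by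
  have h1 : HasDerivAt (fun y : ℝ => 1 + Real.exp y) (Real.exp x) x := by
    simpa using ((Real.hasDerivAt_exp x).const_add 1)
  have h2 := (h1.inv (one_add_exp_pos x).ne').neg
  have h3 := h2.congr_deriv (g' := logisticPsi x) (by unfold logisticPsi; ring)
  refine h3.congr_of_eventuallyEq (Filter.Eventually.of_forall fun y => ?_)
  simp [one_div]

lemma psi_eq (x : ℝ) : logisticPsi x = (Real.exp x + 2 + Real.exp (-x))⁻¹ := by
  have hx := (Real.exp_pos x).ne'
  rw [logisticPsi, Real.exp_neg]
  rw [eq_comm, inv_eq_iff_eq_inv, eq_comm, inv_div]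
  field_simp
  ring

lemma psi_ge {x M : ℝ} (h : |x| ≤ |M|) : logisticPsi M ≤ logisticPsi x := by
  rw [psi_eq, psi_eq]
  have hc : Real.exp x + Real.exp (-x) ≤ Real.exp M + Real.exp (-M) := by
    have := Real.cosh_le_cosh.2 h
    rw [Real.cosh_eq, Real.cosh_eq] at this
    linarith
  have : Real.exp x + 2 + Real.exp (-x) ≤ Real.exp M + 2 + Real.exp (-M) := by linarith
  exact inv_anti₀ (by positivity) this

/-- Local strong convexity of the scalar logistic loss.
For all `a b : ℝ` and every `M ≥ max(|a|, |b|)`: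
`φ(b) ≥ φ(a) + φ′(a)(b − a) + (ψ(M)/2)(b − a)²`, where `φ′(a) = −1/(1 + exp a)`. -/
theorem logistic_local_strong_convexity (a b M : ℝ) (hM : max |a| |b| ≤ M) :
    logisticLoss b ≥ logisticLoss a + (-(1 / (1 + Real.exp a))) * (b - a)
      + logisticPsi M / 2 * (b - a) ^ 2 := by
  have ha : |a| ≤ M := le_trans (le_max_left _ _) hM
  have hb : |b| ≤ M := le_trans (le_max_right _ _) hM
  have hM0 : 0 ≤ M := le_trans (abs_nonneg a) ha
  set c : ℝ := logisticPsi M with hc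
  -- F x := φ x - φ a + (x-a)/(1+e^a) - c/2 (x-a)^2
  set F : ℝ → ℝ := fun x => logisticLoss x - logisticLoss a
      + (1 / (1 + Real.exp a)) * (x - a) - c / 2 * (x - a) ^ 2 with hF
  set G : ℝ → ℝ := fun x => -(1 / (1 + Real.exp x)) + 1 / (1 + Real.exp a) - c * (x - a)
    with hG
  have hFderiv : ∀ x, HasDerivAt F (G x) x := by
    intro x
    have := ((logisticLoss_hasDerivAt x).sub_const (logisticLoss a)).add
      (((hasDerivAt_id x).sub_const a).const_mul (1 / (1 + Real.exp a)))
    have h2 := this.sub ((((hasDerivAt_id x).sub_const a).pow 2).const_mul (c / 2))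
    refine h2.congr_deriv ?_
    simp [hG]; ring
  have hGderiv : ∀ x, HasDerivAt G (logisticPsi x - c) x := by
    intro x
    have := ((logisticDeriv_hasDerivAt x).add_const (1 / (1 + Real.exp a))).sub
      (((hasDerivAt_id x).sub_const a).const_mul c)
    exact this.congr_deriv (by ring)
  -- G is monotone on [-M, M]
  have hGmono : MonotoneOn G (Set.Icc (-M) M) := by
    apply monotoneOn_of_deriv_nonneg (convex_Icc _ _)
      (fun x _ => (hGderiv x).continuousAt.continuousWithinAt)
      (fun x _ => (hGderiv x).differentiableAt.differentiableWithinAt)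
    intro x hx
    rw [interior_Icc] at hx
    rw [(hGderiv x).deriv]
    have : c ≤ logisticPsi x := by
      apply psi_ge
      rw [abs_of_nonneg hM0]
      exact abs_le.2 ⟨hx.1.le, hx.2.le⟩
    linarith
  have haI : a ∈ Set.Icc (-M) M := abs_le.1 ha |>.imp neg_le.1 id |> fun h => ⟨(abs_le.1 ha).1 |> fun h' => by linarith [(abs_le.1 ha).1], (abs_le.1 ha).2⟩
  have hbI : b ∈ Set.Icc (-M) M := ⟨(abs_le.1 hb).1, (abs_le.1 hb).2⟩
  have hGa : G a = 0 := by simp [hG]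
  have key : 0 ≤ F b := by
    rcases le_total a b with hab | hab
    · -- F monotone on [a, b]
      have hsub : Set.Icc a b ⊆ Set.Icc (-M) M :=
        Set.Icc_subset_Icc haI.1 hbI.2
      have hFmono : MonotoneOn F (Set.Icc a b) := by
        apply monotoneOn_of_deriv_nonneg (convex_Icc _ _)
          (fun x _ => (hFderiv x).continuousAt.continuousWithinAt)
          (fun x _ => (hFderiv x).differentiableAt.differentiableWithinAt)
        intro x hx
        rw [interior_Icc] at hx
        rw [(hFderiv x).deriv, ← hGa]
        exact hGmono haI (hsub ⟨hx.1.le, hx.2.le⟩) hx.1.le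
      have := hFmono ⟨le_refl a, hab⟩ ⟨hab, le_refl b⟩ hab
      simpa [hF] using this
    · -- F antitone on [b, a]
      have hsub : Set.Icc b a ⊆ Set.Icc (-M) M :=
        Set.Icc_subset_Icc hbI.1 haI.2
      have hFanti : AntitoneOn F (Set.Icc b a) := by
        apply antitoneOn_of_deriv_nonpos (convex_Icc _ _)
          (fun x _ => (hFderiv x).continuousAt.continuousWithinAt)
          (fun x _ => (hFderiv x).differentiableAt.differentiableWithinAt)
        intro x hx
        rw [interior_Icc] at hx
        rw [(hFderiv x).deriv, ← hGa]
        exact hGmono (hsub ⟨hx.1.le, hx.2.le⟩) haI hx.2.le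
      have := hFanti ⟨le_refl b, hab⟩ ⟨hab, le_refl a⟩ hab
      simpa [hF] using this
  have : F b = logisticLoss b - logisticLoss a
      + (1 / (1 + Real.exp a)) * (b - a) - c / 2 * (b - a) ^ 2 := rfl
  rw [this] at key
  simp only [ge_iff_le]
  nlinarith [key]
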